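/- arXiv:1309.4818 — 6 statements merged into one kernel-verified Lean document; each statement's English description precedes it below -/
import Mathlib

section
/- Let α and e be epsilon numbers and x an ordinal with x < α. Then x[α := e] = x, i.e., substituting α by e in the Cantor normal form of x leaves x unchanged. -/
open Ordinal

def IsEps (x : Ordinal.{0}) : Prop := omega0 ^ x = x

/-- Substitution of the epsilon number `α` by the epsilon number `e` in the
iterated Cantor normal form of `x`. -/
noncomputable def subst (α e : Ordinal.{0}) (x : Ordinal.{0}) : Ordinal.{0} :=
  if h : omega0 ^ x = x then (if x = α then e else x)
  else ((CNF omega0 x).attach.map (fun p => omega0 ^ (subst α e p.1.1) * p.1.2)).sum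
termination_by x
decreasing_by
  have hx0 : x ≠ 0 := by
    rintro rfl
    have := p.2
    simp [Ordinal.CNF.zero_right] at this
  have hle := Ordinal.CNF.fst_le_log p.2
  have hlt : Ordinal.log omega0 x < x := by
    have h1 : x < omega0 ^ x :=
      lt_of_le_of_ne (Ordinal.right_le_opow x one_lt_omega0) (Ne.symm h)
    exact (Ordinal.lt_opow_iff_log_lt one_lt_omega0 hx0).mp h1
  exact lt_of_le_of_lt hle hlt

/-- Substituting α by e in the Cantor normal form of x < α leaves x unchanged. -/
theorem subst_eq_self_of_lt (α e x : Ordinal.{0}) (hα : IsEps α) (he : IsEps e)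
    (hx : x < α) : subst α e x = x := by
  revert hx
  induction x using Ordinal.induction with
  | h x IH =>
    intro hx
    rw [subst]
    split_ifs with h h2
    · exact absurd h2 (by rintro rfl; exact lt_irrefl _ hx)
    · rfl
    · rcases eq_or_ne x 0 with rfl | hx0
      · rw [show CNF omega0 0 = [] from Ordinal.CNF.zero_right _]; simp
      have hlt : Ordinal.log omega0 x < x := by
        have h1 : x < omega0 ^ x :=
          lt_of_le_of_ne (Ordinal.right_le_opow x one_lt_omega0) (Ne.symm h)
        exact (Ordinal.lt_opow_iff_log_lt one_lt_omega0 hx0).mp h1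
      have hmap : ((CNF omega0 x).attach.map
          (fun p => omega0 ^ (subst α e p.1.1) * p.1.2)).sum
          = ((CNF omega0 x).map (fun p => omega0 ^ p.1 * p.2)).sum := by
        congr 1
        rw [List.map_congr_left (fun p _ =>
          by
            have hplt : p.1.1 < x := lt_of_le_of_lt (Ordinal.CNF.fst_le_log p.2) hlt
            rw [IH p.1.1 hplt (hplt.trans hx)])]
        exact List.attach_map_val (l := CNF omega0 x) (f := fun p => omega0 ^ p.1 * p.2)
      rw [hmap, List.sum_eq_foldr, List.foldr_map]
      exact Ordinal.CNF.foldr omega0 x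
end

section
/- Let α, e be epsilon numbers and let q, s be ordinals less than α⁺ (the least epsilon number greater than α) such that Ep(q) ∩ α ⊆ e and Ep(s) ∩ α ⊆ e (i.e., every epsilon number below α occurring in the Cantor normal forms of q or s is below e). Then q < s if and only if q[α := e] < s[α := e]. -/
open Ordinal

noncomputable def nextEps (x : Ordinal.{0}) : Ordinal.{0} := sInf {e | IsEps e ∧ x < e}

inductive InEp : Ordinal.{0} → Ordinal.{0} → Prop
  | self (x : Ordinal.{0}) (h : omega0 ^ x = x) : InEp x x
  | exp (x e c y : Ordinal.{0}) (h : omega0 ^ x ≠ x) (hm : (e, c) ∈ CNF omega0 x)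
      (hy : InEp y e) : InEp y x

/-- The set of epsilon numbers appearing in the iterated Cantor normal form of `x`. -/
def Ep (x : Ordinal.{0}) : Set Ordinal.{0} := {y | InEp y x}

open Ordinal

namespace SubstAux

lemma isEps_pos {x : Ordinal} (h : IsEps x) : 0 < x := by
  rcases eq_zero_or_pos x with rfl | hx
  · simp [IsEps] at h
  · exact hx

lemma isEps_ne_zero {x : Ordinal} (h : IsEps x) : x ≠ 0 := (isEps_pos h).ne'

lemma isEps_limit {x : Ordinal} (h : IsEps x) : Order.IsSuccLimit x := by
  have h2 : Order.IsSuccLimit (omega0 ^ x) := isSuccLimit_opow_left isSuccLimit_omega0 (isEps_ne_zero h)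
  rwa [h] at h2

lemma CNF_eps {x : Ordinal} (h : IsEps x) : CNF omega0 x = [(x, 1)] := by
  rw [CNF.ne_zero (isEps_ne_zero h)]
  have hlog : log omega0 x = x := by
    conv_lhs => rw [← h]
    exact log_opow one_lt_omega0 x
  have h1 : omega0 ^ x = x := h
  rw [hlog, h1, Ordinal.div_self (isEps_ne_zero h), Ordinal.mod_self, CNF.zero_right]

lemma subst_eps {α e x : Ordinal} (h : omega0 ^ x = x) :
    subst α e x = if x = α then e else x := by
  rw [subst, dif_pos h]

lemma subst_eps_eps {α e x : Ordinal} (he : IsEps e) (h : IsEps x) : IsEps (subst α e x) := by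
  rw [subst_eps h]; split_ifs <;> assumption

lemma subst_zero {α e : Ordinal} : subst α e 0 = 0 := by
  have h : ¬ (omega0 ^ (0:Ordinal) = 0) := by simp
  rw [subst, dif_neg h, CNF.zero_right]
  rfl

lemma subst_map_sum (α e x : Ordinal) (he : IsEps e) :
    ((CNF omega0 x).map (fun p => omega0 ^ (subst α e p.1) * p.2)).sum = subst α e x := by
  by_cases h : IsEps x
  · rw [CNF_eps h]
    simp only [List.map_cons, List.map_nil, List.sum_cons, List.sum_nil, add_zero, mul_one]
    exact subst_eps_eps he h
  · have h' : ¬ (omega0 ^ x = x) := h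
    rw [subst, dif_neg h']
    congr 1
    rw [← List.attach_map_val (l := CNF omega0 x) (f := fun p => omega0 ^ (subst α e p.1) * p.2)]

lemma subst_eq {α e x : Ordinal} (he : IsEps e) (hx : x ≠ 0) :
    subst α e x = omega0 ^ (subst α e (log omega0 x)) * (x / omega0 ^ log omega0 x)
      + subst α e (x % omega0 ^ log omega0 x) := by
  conv_lhs => rw [← subst_map_sum α e x he]
  rw [CNF.ne_zero hx]
  simp only [List.map_cons, List.sum_cons]
  rw [subst_map_sum _ _ _ he]

lemma subst_pos {α e x : Ordinal} (he : IsEps e) (hx : x ≠ 0) : 0 < subst α e x := by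
  rw [subst_eq he hx]
  have h1 : (0:Ordinal) < omega0 ^ subst α e (log omega0 x) :=
    opow_pos _ omega0_pos
  have h2 : (0:Ordinal) < x / omega0 ^ log omega0 x :=
    (Ordinal.div_pos (opow_ne_zero _ omega0_ne_zero)).2 (opow_log_le_self _ hx)
  exact lt_of_lt_of_le (mul_pos h1 h2) le_self_add

end SubstAux
namespace SubstAux

lemma log_lt_self {x : Ordinal} (h : ¬ omega0 ^ x = x) (hx : x ≠ 0) : log omega0 x < x := by
  have h1 : x < omega0 ^ x :=
    lt_of_le_of_ne (Ordinal.right_le_opow x one_lt_omega0) (Ne.symm h)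
  exact (lt_opow_iff_log_lt one_lt_omega0 hx).mp h1

lemma inEp_le {y x : Ordinal} (h : InEp y x) : y ≤ x := by
  induction h with
  | self x h => exact le_rfl
  | exp x a c y h hm hy ih => exact ih.trans ((CNF.fst_le_log hm).trans (log_le_self _ _))

lemma inEp_iff {y x : Ordinal} : InEp y x ↔ ∃ a c, (a, c) ∈ CNF omega0 x ∧ InEp y a := by
  constructor
  · intro h
    cases h with
    | self z hz =>
      refine ⟨y, 1, ?_, InEp.self y hz⟩
      rw [CNF_eps hz]; simp
    | exp x a c y h hm hy => exact ⟨a, c, hm, hy⟩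
  · rintro ⟨a, c, hm, hy⟩
    by_cases h : omega0 ^ x = x
    · rw [CNF_eps h] at hm
      simp only [List.mem_singleton, Prod.mk.injEq] at hm
      rw [← hm.1]
      exact hy
    · exact InEp.exp x a c y h hm hy

lemma ep_of_mem_CNF {y a c x : Ordinal} (hm : (a, c) ∈ CNF omega0 x) (hy : y ∈ Ep a) :
    y ∈ Ep x := inEp_iff.2 ⟨a, c, hm, hy⟩

lemma head_mem_CNF {x : Ordinal} (hx : x ≠ 0) :
    (log omega0 x, x / omega0 ^ log omega0 x) ∈ CNF omega0 x := by
  rw [CNF.ne_zero hx]; exact List.mem_cons_self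

lemma ep_log_subset {x : Ordinal} (hx : x ≠ 0) : Ep (log omega0 x) ⊆ Ep x :=
  fun _ hy => ep_of_mem_CNF (head_mem_CNF hx) hy

lemma ep_rem_subset {x : Ordinal} (hx : x ≠ 0) :
    Ep (x % omega0 ^ log omega0 x) ⊆ Ep x := by
  intro y hy
  obtain ⟨a, c, hm, hy⟩ := inEp_iff.1 hy
  refine ep_of_mem_CNF (x := x) (c := c) ?_ hy
  rw [CNF.ne_zero hx]
  exact List.mem_cons_of_mem _ hm

lemma nextEps_spec (α : Ordinal.{0}) : IsEps (nextEps α) ∧ α < nextEps α := by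
  have hfix : IsEps (nfp (omega0 ^ ·) (α+1)) := nfp_fp (isNormal_opow one_lt_omega0) _
  have hlt : α < nfp (omega0 ^ ·) (α+1) :=
    lt_of_lt_of_le (lt_add_one α) (le_nfp _ _)
  have hne : {e : Ordinal.{0} | IsEps e ∧ α < e}.Nonempty := ⟨_, hfix, hlt⟩
  exact csInf_mem hne

lemma eps_le_of_lt_nextEps {s α : Ordinal.{0}} (hs : IsEps s) (h : s < nextEps α) : s ≤ α := by
  by_contra hc
  push_neg at hc
  have hmem : s ∈ {e : Ordinal.{0} | IsEps e ∧ α < e} := ⟨hs, hc⟩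
  exact absurd (csInf_le' hmem) (not_le.2 h)

lemma subst_eq_self {α e : Ordinal} (he : IsEps e) :
    ∀ x : Ordinal, (∀ y ∈ Ep x, y ≠ α) → subst α e x = x := by
  intro x hx
  rcases eq_or_ne x 0 with rfl | hx0
  · exact subst_zero
  by_cases hep : omega0 ^ x = x
  · rw [subst_eps hep, if_neg (hx x (InEp.self x hep))]
  · rw [subst_eq he hx0,
      subst_eq_self he (log omega0 x) (fun y hy => hx y (ep_log_subset hx0 hy)),
      subst_eq_self he (x % omega0 ^ log omega0 x) (fun y hy => hx y (ep_rem_subset hx0 hy)),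
      Ordinal.div_add_mod]
termination_by x => x
decreasing_by
  · exact log_lt_self hep hx0
  · exact mod_opow_log_lt_self omega0 hx0

lemma subst_lt_eps {α e : Ordinal} (he : IsEps e) :
    ∀ x : Ordinal, x < α → (Ep x ∩ Set.Iio α ⊆ Set.Iio e) → subst α e x < e := by
  intro x hxα hxe
  rcases eq_or_ne x 0 with rfl | hx0
  · rw [subst_zero]; exact isEps_pos he
  by_cases hep : omega0 ^ x = x
  · rw [subst_eps hep, if_neg (ne_of_lt hxα)]
    exact hxe ⟨InEp.self x hep, hxα⟩
  · rw [subst_eq he hx0]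
    have hb : subst α e (log omega0 x) < e :=
      subst_lt_eps he (log omega0 x) (lt_trans (log_lt_self hep hx0) hxα)
        (fun y hy => hxe ⟨ep_log_subset hx0 hy.1, hy.2⟩)
    have hr : subst α e (x % omega0 ^ log omega0 x) < e :=
      subst_lt_eps he (x % omega0 ^ log omega0 x)
        (lt_trans (mod_opow_log_lt_self omega0 hx0) hxα)
        (fun y hy => hxe ⟨ep_rem_subset hx0 hy.1, hy.2⟩)
    have hc : x / omega0 ^ log omega0 x < omega0 := by
      rw [Ordinal.div_lt (opow_ne_zero _ omega0_ne_zero), ← opow_succ]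
      exact lt_opow_succ_log_self one_lt_omega0 x
    have h1 : omega0 ^ subst α e (log omega0 x) * (x / omega0 ^ log omega0 x) < e := by
      calc omega0 ^ subst α e (log omega0 x) * (x / omega0 ^ log omega0 x)
          < omega0 ^ subst α e (log omega0 x) * omega0 :=
            mul_lt_mul_of_pos_left hc (opow_pos _ omega0_pos)
        _ = omega0 ^ (subst α e (log omega0 x) + 1) := by rw [opow_add, opow_one]
        _ ≤ omega0 ^ e := by
            refine opow_le_opow_right omega0_pos ?_
            have hsucc : subst α e (log omega0 x) + 1 < e := by
              rw [Ordinal.add_one_eq_succ]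
              exact (isEps_limit he).succ_lt hb
            exact hsucc.le
        _ = e := he
    have := principal_add_omega0_opow e (a := omega0 ^ subst α e (log omega0 x) * (x / omega0 ^ log omega0 x)) (b := subst α e (x % omega0 ^ log omega0 x))
    rw [he] at this
    exact this h1 hr
termination_by x => x
decreasing_by
  · exact log_lt_self hep hx0
  · exact mod_opow_log_lt_self omega0 hx0

end SubstAux
namespace SubstAux

lemma nadd_lt_of_le_of_lt {a b c d : Ordinal} (h1 : a ≤ c) (h2 : b < d) :
    Prod.Lex (· < ·) (Prod.Lex (· < ·) (· < ·)) (max a b, a, b) (max c d, c, d) := by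
  rcases (max_le_max h1 h2.le).lt_or_eq with hm | hm
  · exact Prod.Lex.left _ _ hm
  · rw [hm]
    apply Prod.Lex.right
    rcases h1.lt_or_eq with h | h
    · exact Prod.Lex.left _ _ h
    · rw [h]; exact Prod.Lex.right _ h2

lemma nadd_lt_of_lt_of_le {a b c d : Ordinal} (h1 : a < c) (h2 : b ≤ d) :
    Prod.Lex (· < ·) (Prod.Lex (· < ·) (· < ·)) (max a b, a, b) (max c d, c, d) := by
  rcases (max_le_max h1.le h2).lt_or_eq with hm | hm
  · exact Prod.Lex.left _ _ hm
  · rw [hm]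
    exact Prod.Lex.right _ (Prod.Lex.left _ _ h1)

set_option maxHeartbeats 1600000 in
lemma main {α e : Ordinal.{0}} (hα : IsEps α) (he : IsEps e) (q s : Ordinal.{0})
    (hq : q < nextEps α) (hs : s < nextEps α)
    (hqe : Ep q ∩ Set.Iio α ⊆ Set.Iio e) (hse : Ep s ∩ Set.Iio α ⊆ Set.Iio e) :
    (q < s → subst α e q < subst α e s) ∧
      (q < omega0 ^ s → subst α e q < omega0 ^ subst α e s) := by
  have P : q < s → subst α e q < subst α e s := by
    intro hlt
    by_cases heps : omega0 ^ s = s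
    · -- s is an epsilon number
      rcases eq_or_ne s α with rfl | hsa
      · rw [subst_eps heps, if_pos rfl]
        exact subst_lt_eps he q hlt hqe
      · have hsα : s < α := lt_of_le_of_ne (eps_le_of_lt_nextEps heps hs) hsa
        have hq_self : subst α e q = q :=
          subst_eq_self he q
            (fun y hy => ne_of_lt (lt_of_le_of_lt (inEp_le hy) (lt_trans hlt hsα)))
        rw [subst_eps heps, if_neg hsa, hq_self]
        exact hlt
    · -- s is not an epsilon number
      have hs0 : s ≠ 0 := by rintro rfl; exact absurd hlt (not_lt.2 (zero_le (a := q)))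
      have hb_lt_s : log omega0 s < s := log_lt_self heps hs0
      have hb_next : log omega0 s < nextEps α := lt_trans hb_lt_s hs
      have hbe : Ep (log omega0 s) ∩ Set.Iio α ⊆ Set.Iio e :=
        fun y hy => hse ⟨ep_log_subset hs0 hy.1, hy.2⟩
      have hd_pos : 0 < s / omega0 ^ log omega0 s :=
        (Ordinal.div_pos (opow_ne_zero _ omega0_ne_zero)).2 (opow_log_le_self _ hs0)
      have hs_eq := subst_eq (α := α) he hs0
      by_cases hqb : q < omega0 ^ log omega0 s
      · -- q is below the leading term of s
        have hG := (main hα he q (log omega0 s) hq hb_next hqe hbe).2 hqb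
        calc subst α e q < omega0 ^ subst α e (log omega0 s) := hG
          _ ≤ omega0 ^ subst α e (log omega0 s) * (s / omega0 ^ log omega0 s) :=
              le_mul_left _ hd_pos
          _ ≤ subst α e s := by rw [hs_eq]; exact le_self_add
      · push_neg at hqb
        have hq0 : q ≠ 0 := by
          rintro rfl
          exact absurd hqb (not_le.2 (opow_pos _ omega0_pos))
        have hq_lt_succ : q < omega0 ^ (log omega0 s + 1) :=
          hlt.trans (by rw [Ordinal.add_one_eq_succ]; exact lt_opow_succ_log_self one_lt_omega0 s)
        by_cases hqeps : omega0 ^ q = q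
        · -- q is an epsilon number, hence q = log ω s
          have hqb' : q = log omega0 s := by
            apply le_antisymm
            · have : omega0 ^ q < omega0 ^ (log omega0 s + 1) := by rw [hqeps]; exact hq_lt_succ
              have := (opow_lt_opow_iff_right one_lt_omega0).1 this
              rwa [Ordinal.add_one_eq_succ, Order.lt_succ_iff] at this
            · have : omega0 ^ log omega0 s ≤ omega0 ^ q := by rw [hqeps]; exact hqb
              exact (opow_le_opow_iff_right one_lt_omega0).1 this
          have hsubq_le : subst α e q ≤ omega0 ^ subst α e (log omega0 s) := by
            rw [hqb']
            exact right_le_opow _ one_lt_omega0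
          rw [hs_eq]
          rcases lt_or_ge 1 (s / omega0 ^ log omega0 s) with hd | hd
          · calc subst α e q ≤ omega0 ^ subst α e (log omega0 s) := hsubq_le
              _ = omega0 ^ subst α e (log omega0 s) * 1 := (mul_one _).symm
              _ < omega0 ^ subst α e (log omega0 s) * (s / omega0 ^ log omega0 s) :=
                  mul_lt_mul_of_pos_left hd (opow_pos _ omega0_pos)
              _ ≤ _ := le_self_add
          · have hd1 : s / omega0 ^ log omega0 s = 1 := le_antisymm hd (Order.one_le_iff_pos.2 hd_pos)
            have hs'0 : s % omega0 ^ log omega0 s ≠ 0 := by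
              intro h0
              have : s = omega0 ^ log omega0 s := by
                conv_lhs => rw [← Ordinal.div_add_mod s (omega0 ^ log omega0 s)]
                rw [hd1, h0, mul_one, add_zero]
              rw [this, ← hqb', hqeps] at hlt
              exact absurd hlt (lt_irrefl q)
            calc subst α e q ≤ omega0 ^ subst α e (log omega0 s) := hsubq_le
              _ = omega0 ^ subst α e (log omega0 s) * (s / omega0 ^ log omega0 s) + 0 := by
                  rw [hd1, mul_one, add_zero]
              _ < _ := by
                  rw [add_lt_add_iff_left]
                  exact subst_pos he hs'0
        · -- q is not an epsilon number; same leading exponent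
          have hlogq : log omega0 q = log omega0 s := by
            apply le_antisymm
            · have := (lt_opow_iff_log_lt one_lt_omega0 hq0).1 hq_lt_succ
              rwa [Ordinal.add_one_eq_succ, Order.lt_succ_iff] at this
            · exact (opow_le_iff_le_log one_lt_omega0 hq0).1 hqb
          have hq_eq := subst_eq (α := α) he hq0
          rw [hlogq] at hq_eq
          have hq'_lt : q % omega0 ^ log omega0 q < omega0 ^ log omega0 s := by
            rw [hlogq]
            exact Ordinal.mod_lt q (opow_ne_zero _ omega0_ne_zero)
          have hq'_next : q % omega0 ^ log omega0 q < nextEps α :=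
            lt_trans (mod_opow_log_lt_self omega0 hq0) hq
          have hq'e : Ep (q % omega0 ^ log omega0 q) ∩ Set.Iio α ⊆ Set.Iio e :=
            fun y hy => hqe ⟨ep_rem_subset hq0 hy.1, hy.2⟩
          have hcd : q / omega0 ^ log omega0 q ≤ s / omega0 ^ log omega0 s := by
            rw [hlogq]
            by_contra hc
            push_neg at hc
            have h1 : s < omega0 ^ log omega0 s * Order.succ (s / omega0 ^ log omega0 s) :=
              Ordinal.lt_mul_succ_div s (opow_ne_zero _ omega0_ne_zero)
            have h2 : omega0 ^ log omega0 s * Order.succ (s / omega0 ^ log omega0 s)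
                ≤ omega0 ^ log omega0 s * (q / omega0 ^ log omega0 s) :=
              mul_le_mul_right (Order.succ_le_of_lt hc) _
            have h3 : omega0 ^ log omega0 s * (q / omega0 ^ log omega0 s) ≤ q :=
              Ordinal.mul_div_le q _
            exact absurd (h1.trans_le (h2.trans h3)) (not_lt.2 hlt.le)
          rw [hlogq] at hq'_lt hq'_next hq'e hcd
          rcases lt_or_eq_of_le hcd with hcd' | hcd'
          · -- strictly smaller leading coefficient
            have hG := (main hα he (q % omega0 ^ log omega0 s) (log omega0 s)
              hq'_next hb_next hq'e hbe).2 hq'_lt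
            have hsucc : q / omega0 ^ log omega0 s + 1 ≤ s / omega0 ^ log omega0 s := by
              rw [Ordinal.add_one_eq_succ]
              exact Order.succ_le_of_lt hcd'
            rw [hq_eq, hs_eq]
            calc omega0 ^ subst α e (log omega0 s) * (q / omega0 ^ log omega0 s)
                  + subst α e (q % omega0 ^ log omega0 s)
                < omega0 ^ subst α e (log omega0 s) * (q / omega0 ^ log omega0 s)
                  + omega0 ^ subst α e (log omega0 s) := by
                  rw [add_lt_add_iff_left]; exact hG
              _ = omega0 ^ subst α e (log omega0 s) * (q / omega0 ^ log omega0 s + 1) := by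
                  rw [mul_add, mul_one]
              _ ≤ omega0 ^ subst α e (log omega0 s) * (s / omega0 ^ log omega0 s) :=
                  mul_le_mul_right hsucc _
              _ ≤ _ := le_self_add
          · -- equal leading coefficients; compare remainders
            have hs'_next : s % omega0 ^ log omega0 s < nextEps α :=
              lt_trans (mod_opow_log_lt_self omega0 hs0) hs
            have hs'e : Ep (s % omega0 ^ log omega0 s) ∩ Set.Iio α ⊆ Set.Iio e :=
              fun y hy => hse ⟨ep_rem_subset hs0 hy.1, hy.2⟩
            have hrem : q % omega0 ^ log omega0 s < s % omega0 ^ log omega0 s := by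
              have h1 := Ordinal.div_add_mod q (omega0 ^ log omega0 s)
              have h2 := Ordinal.div_add_mod s (omega0 ^ log omega0 s)
              rw [← add_lt_add_iff_left (omega0 ^ log omega0 s * (s / omega0 ^ log omega0 s))]
              conv_rhs => rw [h2]
              rw [← hcd', h1]
              exact hlt
            have hP := (main hα he (q % omega0 ^ log omega0 s) (s % omega0 ^ log omega0 s)
              hq'_next hs'_next hq'e hs'e).1 hrem
            rw [hq_eq, hs_eq, hcd', add_lt_add_iff_left]
            exact hP
  refine ⟨P, ?_⟩
  intro hlt
  by_cases hqeps : omega0 ^ q = q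
  · have hqs : q < s := by
      rw [← hqeps] at hlt
      exact (opow_lt_opow_iff_right one_lt_omega0).1 hlt
    exact lt_of_lt_of_le (P hqs) (right_le_opow _ one_lt_omega0)
  · rcases eq_or_ne q 0 with rfl | hq0
    · rw [subst_zero]; exact opow_pos _ omega0_pos
    have ha_lt_s : log omega0 q < s := by
      have h1 : omega0 ^ log omega0 q < omega0 ^ s :=
        lt_of_le_of_lt (opow_log_le_self _ hq0) hlt
      exact (opow_lt_opow_iff_right one_lt_omega0).1 h1
    have ha_lt_q : log omega0 q < q := log_lt_self hqeps hq0
    have ha_next : log omega0 q < nextEps α := lt_trans ha_lt_q hq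
    have hae : Ep (log omega0 q) ∩ Set.Iio α ⊆ Set.Iio e :=
      fun y hy => hqe ⟨ep_log_subset hq0 hy.1, hy.2⟩
    have haP := (main hα he (log omega0 q) s ha_next hs hae hse).1 ha_lt_s
    have hq'_next : q % omega0 ^ log omega0 q < nextEps α :=
      lt_trans (mod_opow_log_lt_self omega0 hq0) hq
    have hq'e : Ep (q % omega0 ^ log omega0 q) ∩ Set.Iio α ⊆ Set.Iio e :=
      fun y hy => hqe ⟨ep_rem_subset hq0 hy.1, hy.2⟩
    have hG := (main hα he (q % omega0 ^ log omega0 q) (log omega0 q)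
      hq'_next ha_next hq'e hae).2 (Ordinal.mod_lt q (opow_ne_zero _ omega0_ne_zero))
    have hc_lt : q / omega0 ^ log omega0 q < omega0 := by
      rw [Ordinal.div_lt (opow_ne_zero _ omega0_ne_zero), ← opow_succ]
      exact lt_opow_succ_log_self one_lt_omega0 q
    have hcsucc : q / omega0 ^ log omega0 q + 1 ≤ omega0 := by
      rw [Ordinal.add_one_eq_succ]
      exact (isSuccLimit_omega0.succ_lt hc_lt).le
    have hsub_succ : subst α e (log omega0 q) + 1 ≤ subst α e s := by
      rw [Ordinal.add_one_eq_succ]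
      exact Order.succ_le_of_lt haP
    rw [subst_eq (α := α) he hq0]
    calc omega0 ^ subst α e (log omega0 q) * (q / omega0 ^ log omega0 q)
          + subst α e (q % omega0 ^ log omega0 q)
        < omega0 ^ subst α e (log omega0 q) * (q / omega0 ^ log omega0 q)
          + omega0 ^ subst α e (log omega0 q) := by
          rw [add_lt_add_iff_left]; exact hG
      _ = omega0 ^ subst α e (log omega0 q) * (q / omega0 ^ log omega0 q + 1) := by
          rw [mul_add, mul_one]
      _ ≤ omega0 ^ subst α e (log omega0 q) * omega0 := mul_le_mul_right hcsucc _
      _ = omega0 ^ (subst α e (log omega0 q) + 1) := by rw [opow_add, opow_one]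
      _ ≤ omega0 ^ subst α e s := opow_le_opow_right omega0_pos hsub_succ
termination_by (max q s, q, s)
decreasing_by
  · exact nadd_lt_of_le_of_lt le_rfl hb_lt_s
  · exact nadd_lt_of_le_of_lt
      ((Ordinal.mod_lt q (opow_ne_zero _ omega0_ne_zero)).le.trans (not_lt.1 hqb)) hb_lt_s
  · exact nadd_lt_of_le_of_lt
      ((Ordinal.mod_lt q (opow_ne_zero _ omega0_ne_zero)).le.trans (not_lt.1 hqb))
      (mod_opow_log_lt_self omega0 hs0)
  · exact nadd_lt_of_lt_of_le ha_lt_q le_rfl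
  · exact nadd_lt_of_lt_of_le (mod_opow_log_lt_self omega0 hq0) ha_lt_s.le

end SubstAux

/-- The substitution x ↦ x[α := e] preserves the order on ordinals q, s < α⁺
all of whose epsilon numbers below α are below e. -/
theorem subst_lt_iff_lt (α e q s : Ordinal.{0}) (hα : IsEps α) (he : IsEps e)
    (hq : q < nextEps α) (hs : s < nextEps α)
    (hqe : Ep q ∩ Set.Iio α ⊆ Set.Iio e) (hse : Ep s ∩ Set.Iio α ⊆ Set.Iio e) :
    q < s ↔ subst α e q < subst α e s := by
  constructor
  · exact fun h => (SubstAux.main hα he q s hq hs hqe hse).1 h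
  · intro h
    by_contra hn
    push_neg at hn
    rcases lt_or_eq_of_le hn with hlt | rfl
    · exact absurd ((SubstAux.main hα he s q hs hq hse hqe).1 hlt) (not_lt.2 h.le)
    · exact lt_irrefl _ h
end

section
/- Let α, e be epsilon numbers and s an ordinal with s < α⁺ and Ep(s) ∩ α ⊆ e. Then s[α := e] < e⁺ and Ep(s[α := e]) ∩ e = Ep(s) ∩ α. -/
open Ordinal

section Helpers

theorem eps_ne_zero {x : Ordinal.{0}} (h : IsEps x) : x ≠ 0 := by
  intro h0
  rw [h0] at h
  simp [IsEps] at h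

theorem subst_eps {α e x : Ordinal.{0}} (h : omega0 ^ x = x) :
    subst α e x = if x = α then e else x := by
  rw [subst, dif_pos h]

theorem subst_not_eps {α e x : Ordinal.{0}} (h : omega0 ^ x ≠ x) :
    subst α e x = ((CNF omega0 x).map (fun p => omega0 ^ (subst α e p.1) * p.2)).sum := by
  rw [subst, dif_neg h]
  congr 1
  exact List.attach_map_val (l := CNF omega0 x) (f := fun q => omega0 ^ subst α e q.1 * q.2)

theorem log_eps {x : Ordinal.{0}} (h : IsEps x) : log omega0 x = x := by
  conv_lhs => rw [← h]
  exact log_opow one_lt_omega0 x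

theorem CNF_eps {x : Ordinal.{0}} (h : IsEps x) : CNF omega0 x = [(x, 1)] := by
  rw [CNF.ne_zero (eps_ne_zero h), log_eps h, h, div_self (eps_ne_zero h),
    Ordinal.mod_self, CNF.zero_right]

theorem InEp_isEps {y x : Ordinal.{0}} (h : InEp y x) : IsEps y := by
  induction h with
  | self x h => exact h
  | exp x e c y h hm hy ih => exact ih

theorem InEp_le {y x : Ordinal.{0}} (h : InEp y x) : y ≤ x := by
  induction h with
  | self x h => exact le_rfl
  | exp x e c y h hm hy ih => exact ih.trans (((CNF.fst_le_log hm).trans (log_le_self _ _)))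

theorem Ep_of_eps {x : Ordinal.{0}} (h : IsEps x) : Ep x = {x} := by
  ext y
  constructor
  · rintro (⟨_, _⟩ | ⟨_, _, _, _, hne, _, _⟩)
    · rfl
    · exact absurd h hne
  · rintro rfl
    exact InEp.self _ h

theorem Ep_zero : Ep (0 : Ordinal.{0}) = ∅ := by
  ext y
  simp only [Set.mem_empty_iff_false, iff_false]
  rintro (⟨_, h⟩ | ⟨_, _, _, _, _, hm, _⟩)
  · simp at h
  · simp [CNF.zero_right] at hm

theorem mem_Ep_not_eps {y x : Ordinal.{0}} (h : omega0 ^ x ≠ x) :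
    y ∈ Ep x ↔ ∃ p ∈ CNF omega0 x, y ∈ Ep p.1 := by
  constructor
  · rintro (⟨_, heps⟩ | ⟨_, a, c, _, _, hm, hy⟩)
    · exact absurd heps h
    · exact ⟨(a, c), hm, hy⟩
  · rintro ⟨p, hm, hy⟩
    exact InEp.exp x p.1 p.2 y h hm hy

theorem sum_lt {u : Ordinal.{0}} (l : List (Ordinal.{0} × Ordinal.{0}))
    (hc : ∀ p ∈ l, p.2 < omega0) (hk : ∀ p ∈ l, p.1 < u) :
    (l.map (fun p => omega0 ^ p.1 * p.2)).sum < omega0 ^ u := by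
  induction l with
  | nil => simpa using opow_pos u omega0_pos
  | cons p t ih =>
    simp only [List.map_cons, List.sum_cons]
    refine principal_add_omega0_opow u ?_ (ih (fun q hq => hc q (List.mem_cons_of_mem p hq))
      (fun q hq => hk q (List.mem_cons_of_mem p hq)))
    calc omega0 ^ p.1 * p.2 < omega0 ^ p.1 * omega0 :=
          (mul_lt_mul_iff_right₀ (opow_pos p.1 omega0_pos)).2 (hc p (List.mem_cons_self))
      _ = omega0 ^ (p.1 + 1) := by rw [opow_add, opow_one]
      _ ≤ omega0 ^ u := opow_le_opow_right omega0_pos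
          (by rw [Ordinal.add_one_eq_succ]; exact Order.succ_le_of_lt (hk p (List.mem_cons_self)))

theorem CNF_sum (x : Ordinal.{0}) :
    ((CNF omega0 x).map (fun p => omega0 ^ p.1 * p.2)).sum = x := by
  conv_rhs => rw [← CNF.foldr omega0 x]
  induction CNF omega0 x with
  | nil => simp
  | cons p t ih => simp [ih]

theorem log_lt_self {x : Ordinal.{0}} (h : omega0 ^ x ≠ x) (hx0 : x ≠ 0) :
    log omega0 x < x := by
  have h1 : x < omega0 ^ x :=
    lt_of_le_of_ne (Ordinal.right_le_opow x one_lt_omega0) (Ne.symm h)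
  exact (Ordinal.lt_opow_iff_log_lt one_lt_omega0 hx0).mp h1

theorem CNF_fst_lt_self {x : Ordinal.{0}} {p : Ordinal.{0} × Ordinal.{0}}
    (h : omega0 ^ x ≠ x) (hm : p ∈ CNF omega0 x) : p.1 < x := by
  have hx0 : x ≠ 0 := by rintro rfl; simp [CNF.zero_right] at hm
  exact lt_of_le_of_lt (CNF.fst_le_log hm) (log_lt_self h hx0)

theorem eps_lt {ε : Ordinal.{0}} (hε : IsEps ε) :
    ∀ x : Ordinal.{0}, (∀ y ∈ Ep x, y < ε) → x < ε := by
  intro x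
  induction x using Ordinal.induction with
  | h x IH =>
    intro hEp
    by_cases heps : omega0 ^ x = x
    · exact hEp x (InEp.self x heps)
    · rw [← CNF_sum x, ← hε]
      refine sum_lt _ (fun p hp => CNF.snd_lt one_lt_omega0 hp) (fun p hp => ?_)
      exact IH p.1 (CNF_fst_lt_self heps hp)
        (fun y hy => hEp y ((mem_Ep_not_eps heps).2 ⟨p, hp, hy⟩))

theorem nextEps_mem (x : Ordinal.{0}) : IsEps (nextEps x) ∧ x < nextEps x := by
  have hne : {e | IsEps e ∧ x < e}.Nonempty := by
    refine ⟨nfp (omega0 ^ ·) (x + 1), nfp_fp (isNormal_opow one_lt_omega0) (x + 1), ?_⟩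
    exact lt_of_lt_of_le (lt_add_one x) (le_nfp _ _)
  exact csInf_mem hne

theorem nextEps_le {x ε : Ordinal.{0}} (hε : IsEps ε) (h : x < ε) : nextEps x ≤ ε :=
  csInf_le (OrderBot.bddBelow _) ⟨hε, h⟩

theorem eps_le_of_lt_nextEps {x ε : Ordinal.{0}} (hε : IsEps ε) (h : ε < nextEps x) : ε ≤ x := by
  by_contra hlt
  exact absurd (nextEps_le hε (lt_of_not_ge hlt)) (not_le_of_gt h)

theorem CNF_of_list : ∀ l : List (Ordinal.{0} × Ordinal.{0}),
    ((l.map Prod.fst).Pairwise (· > ·)) → (∀ p ∈ l, 0 < p.2) → (∀ p ∈ l, p.2 < omega0) →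
    CNF omega0 ((l.map (fun p => omega0 ^ p.1 * p.2)).sum) = l := by
  intro l
  induction l with
  | nil => simp [CNF.zero_right]
  | cons p t ih =>
    intro hsort hpos hlt
    simp only [List.map_cons, List.sum_cons]
    have hsort' : (t.map Prod.fst).Pairwise (· > ·) := (List.pairwise_cons.1 hsort).2
    have hkeys : ∀ q ∈ t, q.1 < p.1 := fun q hq =>
      (List.pairwise_cons.1 hsort).1 q.1 (List.mem_map_of_mem (f := Prod.fst) hq)
    have hS : (t.map (fun p => omega0 ^ p.1 * p.2)).sum < omega0 ^ p.1 :=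
      sum_lt t (fun q hq => hlt q (List.mem_cons_of_mem p hq)) hkeys
    have hc0 : p.2 ≠ 0 := (hpos p (List.mem_cons_self)).ne'
    have hx0 : omega0 ^ p.1 * p.2 + (t.map (fun p => omega0 ^ p.1 * p.2)).sum ≠ 0 :=
      (opow_mul_add_pos omega0_ne_zero p.1 hc0 _).ne'
    have hlog : log omega0 (omega0 ^ p.1 * p.2 + (t.map (fun p => omega0 ^ p.1 * p.2)).sum)
        = p.1 := by
      rw [log_opow_mul_add one_lt_omega0 hc0 hS,
        log_eq_zero (hlt p (List.mem_cons_self)), add_zero]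
    rw [CNF.ne_zero hx0, hlog]
    have hdiv : (omega0 ^ p.1 * p.2 + (t.map (fun p => omega0 ^ p.1 * p.2)).sum) / omega0 ^ p.1
        = p.2 := by
      rw [mul_add_div _ (opow_pos p.1 omega0_pos).ne', div_eq_zero_of_lt hS, add_zero]
    have hmod : (omega0 ^ p.1 * p.2 + (t.map (fun p => omega0 ^ p.1 * p.2)).sum) % omega0 ^ p.1
        = (t.map (fun p => omega0 ^ p.1 * p.2)).sum := by
      rw [mul_add_mod_self, Ordinal.mod_eq_of_lt hS]
    rw [hdiv, hmod, ih hsort' (fun q hq => hpos q (List.mem_cons_of_mem p hq))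
      (fun q hq => hlt q (List.mem_cons_of_mem p hq))]

theorem subst_eq_sum (α e x : Ordinal.{0}) (hα : IsEps α) (he : IsEps e) :
    subst α e x = ((CNF omega0 x).map (fun p => omega0 ^ (subst α e p.1) * p.2)).sum := by
  by_cases h : omega0 ^ x = x
  · rw [CNF_eps h, subst_eps h]
    by_cases hxa : x = α
    · simp only [hxa, subst_eps hα, if_pos rfl, List.map_cons, List.map_nil, List.sum_cons,
        List.sum_nil, mul_one, add_zero]
      exact (he : omega0 ^ e = e).symm
    · simp [hxa, subst_eps h, h]
  · exact subst_not_eps h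

end Helpers

theorem Ep_fst_subset {x : Ordinal.{0}} {p : Ordinal.{0} × Ordinal.{0}}
    (hp : p ∈ CNF omega0 x) : Ep p.1 ⊆ Ep x := by
  by_cases h : omega0 ^ x = x
  · rw [CNF_eps h, List.mem_singleton] at hp
    rw [hp]
  · intro y hy
    exact InEp.exp x p.1 p.2 y h (by rwa [Prod.mk.eta]) hy

theorem Ep_tail_subset {x : Ordinal.{0}} (hx0 : x ≠ 0) :
    Ep (x % omega0 ^ log omega0 x) ⊆ Ep x := by
  rcases eq_or_ne (x % omega0 ^ log omega0 x) 0 with h0 | h0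
  · rw [h0, Ep_zero]
    exact Set.empty_subset _
  by_cases hre : omega0 ^ (x % omega0 ^ log omega0 x) = x % omega0 ^ log omega0 x
  · have hmem : (x % omega0 ^ log omega0 x, 1) ∈ CNF omega0 x := by
      rw [CNF.ne_zero hx0]
      exact List.mem_cons_of_mem _ (by rw [CNF_eps hre]; exact List.mem_singleton_self _)
    exact Ep_fst_subset hmem
  · intro y hy
    obtain ⟨p, hp, hyp⟩ := (mem_Ep_not_eps hre).1 hy
    refine Ep_fst_subset ?_ hyp
    rw [CNF.ne_zero hx0]
    exact List.mem_cons_of_mem _ hp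

theorem subst_zero (α e : Ordinal.{0}) : subst α e 0 = 0 := by
  rw [subst_not_eps (by simp), CNF.zero_right]
  rfl

theorem subst_lt_opow (α e : Ordinal.{0}) (hα : IsEps α) (he : IsEps e) (y u : Ordinal.{0})
    (hk : ∀ p ∈ CNF omega0 y, subst α e p.1 < u) :
    subst α e y < omega0 ^ u := by
  rw [subst_eq_sum α e y hα he]
  have h := sum_lt (u := u) ((CNF omega0 y).map (fun p => (subst α e p.1, p.2)))
    (fun q hq => by
      obtain ⟨p, hp, rfl⟩ := List.mem_map.1 hq
      show p.2 < omega0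
      exact CNF.snd_lt one_lt_omega0 hp)
    (fun q hq => by
      obtain ⟨p, hp, rfl⟩ := List.mem_map.1 hq
      show subst α e p.1 < u
      exact hk p hp)
  rw [List.map_map] at h
  exact h

theorem master (α e : Ordinal.{0}) (hα : IsEps α) (he : IsEps e) :
    ∀ x : Ordinal.{0}, x < nextEps α → Ep x ∩ Set.Iio α ⊆ Set.Iio e →
      CNF omega0 (subst α e x) = (CNF omega0 x).map (fun p => (subst α e p.1, p.2)) ∧
      (IsEps (subst α e x) ↔ IsEps x) ∧
      Ep (subst α e x) = (fun a => if a = α then e else a) '' Ep x ∧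
      ∀ y < x, Ep y ∩ Set.Iio α ⊆ Set.Iio e → subst α e y < subst α e x := by
  intro x
  induction x using Ordinal.induction with
  | h x IH =>
  intro hx hcond
  by_cases heps : omega0 ^ x = x
  · -- epsilon case
    have hxle : x ≤ α := eps_le_of_lt_nextEps heps hx
    by_cases hxa : x = α
    · have hsx : subst α e x = e := by rw [subst_eps heps, if_pos hxa]
      refine ⟨?_, ?_, ?_, ?_⟩
      · simp [hsx, CNF_eps he, hxa, CNF_eps hα, subst_eps hα]
      · rw [hsx]; exact iff_of_true he heps
      · rw [hsx, Ep_of_eps he, hxa, Ep_of_eps hα, Set.image_singleton]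
        simp
      · intro y hy hyc
        rw [hsx]
        have hIH := IH y hy (hy.trans hx) hyc
        refine eps_lt he _ (fun z hz => ?_)
        rw [hIH.2.2.1] at hz
        obtain ⟨a, ha, rfl⟩ := hz
        have hlt : a < α := lt_of_le_of_lt (InEp_le ha) (hxa ▸ hy)
        show (if a = α then e else a) < e
        rw [if_neg hlt.ne]
        exact hyc ⟨ha, hlt⟩
    · have hxlt : x < α := lt_of_le_of_ne hxle hxa
      have hsx : subst α e x = x := by rw [subst_eps heps, if_neg hxa]
      refine ⟨?_, ?_, ?_, ?_⟩
      · simp [hsx, CNF_eps heps, subst_eps heps, hxa]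
      · rw [hsx]
      · rw [hsx, Ep_of_eps heps, Set.image_singleton]
        simp [hxa]
      · intro y hy hyc
        rw [hsx]
        have hIH := IH y hy (hy.trans hx) hyc
        refine eps_lt heps _ (fun z hz => ?_)
        rw [hIH.2.2.1] at hz
        obtain ⟨a, ha, rfl⟩ := hz
        have hlt : a < x := lt_of_le_of_lt (InEp_le ha) hy
        show (if a = α then e else a) < x
        rw [if_neg (hlt.trans hxlt).ne]
        exact hlt
  · rcases eq_or_ne x 0 with rfl | hx0
    · refine ⟨?_, ?_, ?_, ?_⟩
      · rw [subst_zero, CNF.zero_right, List.map_nil]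
      · rw [subst_zero]
      · rw [subst_zero, Ep_zero, Set.image_empty]
      · intro y hy
        exact absurd hy (zero_le (a := y)).not_gt
    · -- main non-epsilon case
      have hl : CNF omega0 x =
          (log omega0 x, x / omega0 ^ log omega0 x) :: CNF omega0 (x % omega0 ^ log omega0 x) :=
        CNF.ne_zero hx0
      have hmemL : (log omega0 x, x / omega0 ^ log omega0 x) ∈ CNF omega0 x := by
        rw [hl]; exact List.mem_cons_self
      have hfc : ∀ p ∈ CNF omega0 x, p.1 < nextEps α ∧ Ep p.1 ∩ Set.Iio α ⊆ Set.Iio e :=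
        fun p hp => ⟨(CNF_fst_lt_self heps hp).trans hx,
          fun a ha => hcond ⟨Ep_fst_subset hp ha.1, ha.2⟩⟩
      have IHp : ∀ p ∈ CNF omega0 x,
          CNF omega0 (subst α e p.1) = (CNF omega0 p.1).map (fun q => (subst α e q.1, q.2)) ∧
          (IsEps (subst α e p.1) ↔ IsEps p.1) ∧
          Ep (subst α e p.1) = (fun a => if a = α then e else a) '' Ep p.1 ∧
          ∀ y < p.1, Ep y ∩ Set.Iio α ⊆ Set.Iio e → subst α e y < subst α e p.1 :=
        fun p hp => IH p.1 (CNF_fst_lt_self heps hp) (hfc p hp).1 (hfc p hp).2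
      have hmono : ∀ p ∈ CNF omega0 x, ∀ q ∈ CNF omega0 x, q.1 < p.1 →
          subst α e q.1 < subst α e p.1 :=
        fun p hp q hq hlt => (IHp p hp).2.2.2 q.1 hlt (hfc q hq).2
      have hsorted :
          (((CNF omega0 x).map (fun p => (subst α e p.1, p.2))).map Prod.fst).Pairwise (· > ·) := by
        rw [List.map_map]
        have h1 : (CNF omega0 x).Pairwise (fun p q => p.1 > q.1) :=
          List.pairwise_map.1 ((CNF.sortedGT omega0 x).pairwise)
        exact List.pairwise_map.2
          (h1.imp_of_mem (fun {p q} hp hq h => hmono p hp q hq h))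
      have hCNFsub : CNF omega0 (subst α e x) =
          (CNF omega0 x).map (fun p => (subst α e p.1, p.2)) := by
        rw [subst_not_eps heps]
        have hres := CNF_of_list ((CNF omega0 x).map (fun p => (subst α e p.1, p.2))) hsorted
          (fun q hq => by
            obtain ⟨p, hp, rfl⟩ := List.mem_map.1 hq
            show (0 : Ordinal.{0}) < p.2
            exact CNF.snd_pos hp)
          (fun q hq => by
            obtain ⟨p, hp, rfl⟩ := List.mem_map.1 hq
            show p.2 < omega0
            exact CNF.snd_lt one_lt_omega0 hp)
        rw [List.map_map] at hres
        exact hres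
      have hc0 : x / omega0 ^ log omega0 x ≠ 0 := (CNF.snd_pos hmemL).ne'
      have hsum : subst α e x = omega0 ^ (subst α e (log omega0 x)) * (x / omega0 ^ log omega0 x)
          + subst α e (x % omega0 ^ log omega0 x) := by
        rw [subst_not_eps heps, hl, List.map_cons, List.sum_cons,
          subst_eq_sum α e (x % omega0 ^ log omega0 x) hα he]
      have hnoteps : ¬ IsEps (subst α e x) := by
        intro hE
        have h1 := hCNFsub
        rw [CNF_eps hE, hl, List.map_cons] at h1
        have h2 : (subst α e x, (1 : Ordinal.{0})) =
            (subst α e (log omega0 x), x / omega0 ^ log omega0 x) := (List.cons.inj h1).1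
        have h3 : (CNF omega0 (x % omega0 ^ log omega0 x)).map (fun p => (subst α e p.1, p.2))
            = [] := (List.cons.inj h1).2.symm
        have hr0 : x % omega0 ^ log omega0 x = 0 := by
          by_contra hr0
          rw [CNF.ne_zero hr0] at h3
          simp at h3
        have hc1 : x / omega0 ^ log omega0 x = 1 := (congrArg Prod.snd h2).symm
        have hLeq : subst α e x = subst α e (log omega0 x) := congrArg Prod.fst h2
        have hxeq : x = omega0 ^ log omega0 x := by
          conv_lhs => rw [← div_add_mod x (omega0 ^ log omega0 x)]
          rw [hc1, hr0, mul_one, add_zero]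
        have hLE : IsEps (subst α e (log omega0 x)) := by
          rw [← hLeq]
          exact hE
        have hLeps : IsEps (log omega0 x) :=
          ((IHp _ hmemL).2.1).1 hLE
        have hxlx : x = log omega0 x := by
          conv_lhs => rw [hxeq]
          exact hLeps
        apply heps
        rw [hxlx]
        exact hLeps
      refine ⟨hCNFsub, iff_of_false hnoteps heps, ?_, ?_⟩
      · ext y
        rw [Set.mem_image]
        constructor
        · intro hy
          obtain ⟨q, hq, hyq⟩ := (mem_Ep_not_eps hnoteps).1 hy
          rw [hCNFsub] at hq
          obtain ⟨p, hp, rfl⟩ := List.mem_map.1 hq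
          rw [Set.ext_iff.1 (IHp p hp).2.2.1 y] at hyq
          obtain ⟨a, ha, rfl⟩ := hyq
          exact ⟨a, Ep_fst_subset hp ha, rfl⟩
        · rintro ⟨a, ha, rfl⟩
          obtain ⟨p, hp, hap⟩ := (mem_Ep_not_eps heps).1 ha
          refine (mem_Ep_not_eps hnoteps).2 ⟨(subst α e p.1, p.2), ?_, ?_⟩
          · rw [hCNFsub]
            exact List.mem_map_of_mem hp
          · rw [Set.ext_iff.1 (IHp p hp).2.2.1 _]
            exact ⟨a, hap, rfl⟩
      · intro y hy hyc
        rcases eq_or_ne y 0 with rfl | hy0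
        · rw [subst_zero, hsum]
          exact opow_mul_add_pos omega0_ne_zero _ hc0 _
        · have hly : CNF omega0 y =
              (log omega0 y, y / omega0 ^ log omega0 y) :: CNF omega0 (y % omega0 ^ log omega0 y) :=
            CNF.ne_zero hy0
          have hmemM : (log omega0 y, y / omega0 ^ log omega0 y) ∈ CNF omega0 y := by
            rw [hly]; exact List.mem_cons_self
          have hysum : subst α e y =
              omega0 ^ (subst α e (log omega0 y)) * (y / omega0 ^ log omega0 y)
              + subst α e (y % omega0 ^ log omega0 y) := by
            rw [subst_eq_sum α e y hα he, hly, List.map_cons, List.sum_cons,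
              subst_eq_sum α e (y % omega0 ^ log omega0 y) hα he]
          have hfy : ∀ p ∈ CNF omega0 y, p.1 < nextEps α ∧ Ep p.1 ∩ Set.Iio α ⊆ Set.Iio e :=
            fun p hp => ⟨lt_of_le_of_lt (((CNF.fst_le_log hp).trans (log_le_self _ _))) (hy.trans hx),
              fun a ha => hyc ⟨Ep_fst_subset hp ha.1, ha.2⟩⟩
          have hMle : log omega0 y ≤ log omega0 x := log_mono_right omega0 hy.le
          have hLltx : log omega0 x < x := log_lt_self heps hx0
          have IHL := IH (log omega0 x) hLltx (hfc _ hmemL).1 (hfc _ hmemL).2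
          rcases lt_or_eq_of_le hMle with hML | hML
          · -- log y < log x
            have hMx : log omega0 y < x := hML.trans hLltx
            have hMcond := hfy _ hmemM
            have hsubML : subst α e (log omega0 y) < subst α e (log omega0 x) :=
              IHL.2.2.2 _ hML hMcond.2
            have hylt : subst α e y < omega0 ^ (subst α e (log omega0 y) + 1) := by
              refine subst_lt_opow α e hα he y _ (fun p hp => ?_)
              rcases eq_or_lt_of_le (CNF.fst_le_log hp) with hpe | hpl
              · rw [hpe]
                exact lt_add_one _
              · exact lt_trans
                  ((IH (log omega0 y) hMx hMcond.1 hMcond.2).2.2.2 p.1 hpl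
                    (fun a ha => hyc ⟨Ep_fst_subset hp ha.1, ha.2⟩))
                  (lt_add_one _)
            refine lt_of_lt_of_le hylt ?_
            calc omega0 ^ (subst α e (log omega0 y) + 1)
                ≤ omega0 ^ (subst α e (log omega0 x)) := opow_le_opow_right omega0_pos
                  (by rw [Ordinal.add_one_eq_succ]; exact Order.succ_le_of_lt hsubML)
              _ ≤ omega0 ^ (subst α e (log omega0 x)) * (x / omega0 ^ log omega0 x) := by
                  conv_lhs => rw [← mul_one (omega0 ^ (subst α e (log omega0 x)))]
                  exact mul_le_mul_right (Ordinal.one_le_iff_ne_zero.2 hc0) _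
              _ ≤ subst α e x := by rw [hsum]; exact le_self_add
          · -- log y = log x
            have hdc : y / omega0 ^ log omega0 x ≤ x / omega0 ^ log omega0 x := by
              refine (Ordinal.div_le (opow_ne_zero _ omega0_ne_zero)).2 ?_
              exact hy.trans (lt_mul_succ_div x (opow_ne_zero _ omega0_ne_zero))
            rw [hML] at hysum hly hmemM
            rcases lt_or_eq_of_le hdc with hdlt | hdeq
            · -- head coefficient smaller
              have hslt : subst α e (y % omega0 ^ log omega0 x) <
                  omega0 ^ (subst α e (log omega0 x)) := by
                refine subst_lt_opow α e hα he _ _ (fun p hp => ?_)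
                have hs0 : y % omega0 ^ log omega0 x ≠ 0 := by
                  rintro h0
                  rw [h0, CNF.zero_right] at hp
                  simp at hp
                have hpl : p.1 < log omega0 x :=
                  lt_of_le_of_lt (CNF.fst_le_log hp)
                    ((lt_opow_iff_log_lt one_lt_omega0 hs0).1
                      (mod_lt y (opow_ne_zero _ omega0_ne_zero)))
                refine IHL.2.2.2 p.1 hpl (fun a ha => hyc ⟨?_, ha.2⟩)
                have := Ep_tail_subset hy0
                rw [hML] at this
                exact this (Ep_fst_subset hp ha.1)
              rw [hysum, hsum]
              calc omega0 ^ (subst α e (log omega0 x)) * (y / omega0 ^ log omega0 x)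
                    + subst α e (y % omega0 ^ log omega0 x)
                  < omega0 ^ (subst α e (log omega0 x)) * (y / omega0 ^ log omega0 x)
                    + omega0 ^ (subst α e (log omega0 x)) := add_lt_add_right hslt _
                _ = omega0 ^ (subst α e (log omega0 x)) * (y / omega0 ^ log omega0 x + 1) := by
                    rw [mul_add, mul_one]
                _ ≤ omega0 ^ (subst α e (log omega0 x)) * (x / omega0 ^ log omega0 x) :=
                    mul_le_mul_right
                      (by rw [Ordinal.add_one_eq_succ]; exact Order.succ_le_of_lt hdlt) _
                _ ≤ _ := le_self_add
            · -- equal head terms, recurse on remainders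
              have hyeq : omega0 ^ log omega0 x * (y / omega0 ^ log omega0 x)
                  + y % omega0 ^ log omega0 x = y := div_add_mod y _
              have hxeq : omega0 ^ log omega0 x * (x / omega0 ^ log omega0 x)
                  + x % omega0 ^ log omega0 x = x := div_add_mod x _
              have hsr : y % omega0 ^ log omega0 x < x % omega0 ^ log omega0 x := by
                have h1 : omega0 ^ log omega0 x * (y / omega0 ^ log omega0 x)
                    + y % omega0 ^ log omega0 x
                    < omega0 ^ log omega0 x * (x / omega0 ^ log omega0 x)
                    + x % omega0 ^ log omega0 x := by rw [hyeq, hxeq]; exact hy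
                rw [hdeq] at h1
                exact (add_lt_add_iff_left _).1 h1
              have hrx : x % omega0 ^ log omega0 x < x := mod_opow_log_lt_self omega0 hx0
              have IHr := IH _ hrx (hrx.trans hx)
                (fun a ha => hcond ⟨Ep_tail_subset hx0 ha.1, ha.2⟩)
              have hsublt : subst α e (y % omega0 ^ log omega0 x)
                  < subst α e (x % omega0 ^ log omega0 x) := by
                refine IHr.2.2.2 _ hsr (fun a ha => hyc ⟨?_, ha.2⟩)
                have := Ep_tail_subset hy0
                rw [hML] at this
                exact this ha.1
              rw [hysum, hsum, hdeq]
              exact add_lt_add_right hsublt _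

/-- If s < α⁺ and Ep(s) ∩ α ⊆ e, then s[α := e] < e⁺ and
Ep(s[α := e]) ∩ e = Ep(s) ∩ α. -/
theorem subst_mem_and_Ep (α e s : Ordinal.{0}) (hα : IsEps α) (he : IsEps e)
    (hs : s < nextEps α) (hse : Ep s ∩ Set.Iio α ⊆ Set.Iio e) :
    subst α e s < nextEps e ∧
      Ep (subst α e s) ∩ Set.Iio e = Ep s ∩ Set.Iio α := by
  have hEp := (master α e hα he s hs hse).2.2.1
  constructor
  · refine eps_lt (nextEps_mem e).1 _ (fun z hz => ?_)
    rw [hEp] at hz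
    obtain ⟨a, ha, rfl⟩ := hz
    have hale : a ≤ α := eps_le_of_lt_nextEps (InEp_isEps ha) ((InEp_le ha).trans_lt hs)
    show (if a = α then e else a) < nextEps e
    by_cases haα : a = α
    · rw [if_pos haα]
      exact (nextEps_mem e).2
    · rw [if_neg haα]
      exact lt_trans (hse ⟨ha, lt_of_le_of_ne hale haα⟩) (nextEps_mem e).2
  · ext z
    simp only [Set.mem_inter_iff, Set.mem_Iio]
    constructor
    · rintro ⟨hz, hze⟩
      rw [hEp] at hz
      obtain ⟨a, ha, rfl⟩ := hz
      have hale : a ≤ α := eps_le_of_lt_nextEps (InEp_isEps ha) ((InEp_le ha).trans_lt hs)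
      by_cases haα : a = α
      · simp [haα] at hze
      · have ha' : (if a = α then e else a) = a := if_neg haα
        refine ⟨?_, ?_⟩
        · show (if a = α then e else a) ∈ Ep s
          rw [ha']
          exact ha
        · show (if a = α then e else a) < α
          rw [ha']
          exact lt_of_le_of_ne hale haα
    · rintro ⟨hz, hzα⟩
      refine ⟨?_, hse ⟨hz, hzα⟩⟩
      rw [hEp]
      exact ⟨z, hz, by simp [hzα.ne]⟩
end

section
/- Let α, e be epsilon numbers and q, s ordinals less than α⁺ with Ep(q) ∩ α ⊆ e and Ep(s) ∩ α ⊆ e. Then (q + s)[α := e] = q[α := e] + s[α := e] and (q · s)[α := e] = q[α := e] · s[α := e]. -/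
open Ordinal

namespace SubstLemmas

lemma eps_ne_zero {x : Ordinal.{0}} (h : omega0 ^ x = x) : x ≠ 0 := by
  intro h0
  rw [h0, opow_zero] at h
  exact one_ne_zero h

lemma eps_log {x : Ordinal.{0}} (h : omega0 ^ x = x) : log omega0 x = x := by
  conv_lhs => rw [← h]
  exact log_opow one_lt_omega0 x

lemma CNF_eps {x : Ordinal.{0}} (h : omega0 ^ x = x) : CNF omega0 x = [(x, 1)] := by
  rw [CNF.ne_zero (eps_ne_zero h), eps_log h, h, div_self (eps_ne_zero h), mod_self, CNF.zero_right]

lemma subst_of_eps (α e : Ordinal.{0}) {x : Ordinal.{0}} (h : omega0 ^ x = x) :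
    subst α e x = if x = α then e else x := by
  rw [subst, dif_pos h]

lemma subst_of_not_eps (α e : Ordinal.{0}) {x : Ordinal.{0}} (h : omega0 ^ x ≠ x) :
    subst α e x = ((CNF omega0 x).map (fun p => omega0 ^ (subst α e p.1) * p.2)).sum := by
  rw [subst, dif_neg h]
  congr 1
  exact List.attach_map_val (l := CNF omega0 x) (f := fun p => omega0 ^ (subst α e p.1) * p.2)

lemma subst_zero (α e : Ordinal.{0}) : subst α e 0 = 0 := by
  rw [subst_of_not_eps α e (by simp), CNF.zero_right]
  simp

lemma isEps_subst {α e : Ordinal.{0}} (he : omega0 ^ e = e) {x : Ordinal.{0}}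
    (h : omega0 ^ x = x) : omega0 ^ subst α e x = subst α e x := by
  rw [subst_of_eps α e h]
  split
  · exact he
  · exact h

lemma subst_eq {α e : Ordinal.{0}} (he : omega0 ^ e = e) {x : Ordinal.{0}} (hx : x ≠ 0) :
    subst α e x = omega0 ^ subst α e (log omega0 x) * (x / omega0 ^ log omega0 x)
      + subst α e (x % omega0 ^ log omega0 x) := by
  by_cases hxe : omega0 ^ x = x
  · rw [eps_log hxe, hxe, div_self hx, mod_self, mul_one, subst_zero, add_zero,
      isEps_subst he hxe]
  · rw [subst_of_not_eps α e hxe]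
    conv_lhs => rw [CNF.ne_zero hx]
    rw [List.map_cons, List.sum_cons]
    congr 1
    set t := x % omega0 ^ log omega0 x with htdef
    rcases eq_or_ne t 0 with ht0 | ht0
    · rw [ht0, CNF.zero_right, subst_zero]
      simp
    · by_cases hte : omega0 ^ t = t
      · rw [CNF_eps hte, List.map_cons, List.map_nil, List.sum_cons, List.sum_nil,
          mul_one, add_zero, isEps_subst he hte]
      · exact (subst_of_not_eps α e hte).symm

lemma substE {α e : Ordinal.{0}} (he : omega0 ^ e = e) {a c t : Ordinal.{0}}
    (hc0 : c ≠ 0) (hcw : c < omega0) (ht : t < omega0 ^ a) :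
    subst α e (omega0 ^ a * c + t) = omega0 ^ subst α e a * c + subst α e t := by
  have hwa : omega0 ^ a ≠ 0 := opow_ne_zero a omega0_ne_zero
  have hx0 : omega0 ^ a * c + t ≠ 0 := by
    intro h0
    rcases add_eq_zero_iff.mp h0 with ⟨h1, -⟩
    rcases mul_eq_zero.mp h1 with h2 | h2
    · exact hwa h2
    · exact hc0 h2
  have hlog : log omega0 (omega0 ^ a * c + t) = a := by
    rw [log_opow_mul_add one_lt_omega0 hc0 ht, log_eq_zero hcw, add_zero]
  have hdiv : (omega0 ^ a * c + t) / omega0 ^ a = c := by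
    rw [mul_add_div _ hwa, div_eq_zero_of_lt ht, add_zero]
  have hmod : (omega0 ^ a * c + t) % omega0 ^ a = t := by
    rw [mul_add_mod_self, mod_eq_of_lt ht]
  rw [subst_eq he hx0, hlog, hdiv, hmod]

lemma subst_opow {α e : Ordinal.{0}} (he : omega0 ^ e = e) (a : Ordinal.{0}) :
    subst α e (omega0 ^ a) = omega0 ^ subst α e a := by
  by_cases h : omega0 ^ (omega0 ^ a) = omega0 ^ a
  · have haa : omega0 ^ a = a := by
      have h2 := congrArg (log omega0) h
      rwa [log_opow one_lt_omega0, log_opow one_lt_omega0] at h2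
    rw [haa]
    exact (isEps_subst he haa).symm
  · have hrep : omega0 ^ a = omega0 ^ a * 1 + 0 := by simp
    rw [hrep, substE he one_ne_zero one_lt_omega0 (by simp [opow_pos a omega0_pos]), subst_zero]
    simp

lemma subst_ne_zero {α e : Ordinal.{0}} (he : omega0 ^ e = e) {x : Ordinal.{0}} (h : x ≠ 0) :
    subst α e x ≠ 0 := by
  rw [subst_eq he h]
  have hpos : 0 < omega0 ^ subst α e (log omega0 x) * (x / omega0 ^ log omega0 x) :=
    mul_pos (opow_pos _ omega0_pos) (div_opow_log_pos omega0 h)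
  exact (lt_of_lt_of_le hpos (le_self_add)).ne'

lemma subst_nat {α e : Ordinal.{0}} (he : omega0 ^ e = e) {x : Ordinal.{0}} (h : x < omega0) :
    subst α e x = x := by
  rcases eq_or_ne x 0 with rfl | h0
  · exact subst_zero α e
  · have hrep : x = omega0 ^ (0 : Ordinal.{0}) * x + 0 := by simp
    conv_lhs => rw [hrep]
    rw [substE he h0 h (by simp [zero_lt_one]), subst_zero]
    simp

/-- The goodness predicate: `x` is below `α⁺` and its epsilon numbers below `α` are below `e`. -/
def Good (α e x : Ordinal.{0}) : Prop := x < nextEps α ∧ Ep x ∩ Set.Iio α ⊆ Set.Iio e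

lemma lt_nextEps {α : Ordinal.{0}} (hα : IsEps α) : α < nextEps α := by
  have hne : Set.Nonempty {e : Ordinal.{0} | IsEps e ∧ α < e} := by
    refine ⟨nfp (omega0 ^ ·) (α + 1), ?_, ?_⟩
    · exact nfp_fp (isNormal_opow one_lt_omega0) _
    · exact lt_of_lt_of_le (lt_add_one α) (le_nfp _ _)
  exact (csInf_mem hne).2

lemma eps_le_of_lt_nextEps {α x : Ordinal.{0}} (hx : omega0 ^ x = x) (h : x < nextEps α) :
    x ≤ α := by
  by_contra hc
  push_neg at hc
  exact absurd (csInf_le (OrderBot.bddBelow _) (Set.mem_setOf_eq ▸ ⟨hx, hc⟩)) (not_le.2 h)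

lemma inEp_eps {x y : Ordinal.{0}} (h : omega0 ^ x = x) (hy : InEp y x) : y = x := by
  cases hy with
  | self => rfl
  | exp x e c y hne hm hy2 => exact absurd h hne

lemma ep_zero_empty {y : Ordinal.{0}} (h : InEp y 0) : False := by
  cases h with
  | self x hx => simp at hx
  | exp x e c y hne hm hy2 =>
    rw [CNF.zero_right] at hm
    exact List.not_mem_nil hm

lemma good_zero {α e : Ordinal.{0}} (hα : IsEps α) : Good α e 0 := by
  refine ⟨lt_of_le_of_lt (zero_le : (0 : Ordinal.{0}) ≤ α) (lt_nextEps hα), ?_⟩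
  rintro y ⟨h1, -⟩
  exact absurd h1 ep_zero_empty

lemma good_alpha {α e : Ordinal.{0}} (hα : IsEps α) : Good α e α := by
  refine ⟨lt_nextEps hα, ?_⟩
  rintro y ⟨h1, h2⟩
  rw [inEp_eps hα h1] at h2
  exact absurd h2 (lt_irrefl α)

lemma inEp_log {x y : Ordinal.{0}} (hx0 : x ≠ 0) (hxe : omega0 ^ x ≠ x)
    (h : InEp y (log omega0 x)) : InEp y x :=
  InEp.exp x (log omega0 x) (x / omega0 ^ log omega0 x) y hxe
    (by rw [CNF.ne_zero hx0]; exact List.mem_cons_self) h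

lemma good_log {α e x : Ordinal.{0}} (hx : Good α e x) : Good α e (log omega0 x) := by
  refine ⟨lt_of_le_of_lt (log_le_self _ _) hx.1, ?_⟩
  rcases eq_or_ne x 0 with rfl | hx0
  · rw [log_zero_right]
    rintro y ⟨h1, -⟩
    exact absurd h1 ep_zero_empty
  by_cases hxe : omega0 ^ x = x
  · rw [eps_log hxe]
    exact hx.2
  · rintro y ⟨h1, h2⟩
    exact hx.2 ⟨inEp_log hx0 hxe h1, h2⟩

lemma inEp_cases {t y : Ordinal.{0}} (h : InEp y t) :
    (omega0 ^ t = t ∧ y = t) ∨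
      (omega0 ^ t ≠ t ∧ ∃ e' c, (e', c) ∈ CNF omega0 t ∧ InEp y e') := by
  cases h with
  | self z h2 => exact Or.inl ⟨h2, rfl⟩
  | exp e' c hne hm hy2 => exact Or.inr ⟨hy2, c, hne, by assumption, by assumption⟩

lemma inEp_mod {x y : Ordinal.{0}} (hx0 : x ≠ 0) (hxe : omega0 ^ x ≠ x)
    (h : InEp y (x % omega0 ^ log omega0 x)) : InEp y x := by
  have hmem : ∀ p : Ordinal.{0} × Ordinal.{0},
      p ∈ CNF omega0 (x % omega0 ^ log omega0 x) → p ∈ CNF omega0 x := by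
    intro p hp
    rw [CNF.ne_zero hx0]
    exact List.mem_cons_of_mem _ hp
  rcases inEp_cases h with ⟨hz, rfl⟩ | ⟨-, e', c', hm, hy2⟩
  · refine InEp.exp x _ 1 _ hxe (hmem _ ?_) (InEp.self _ hz)
    rw [CNF_eps hz]
    exact List.mem_cons_self
  · exact InEp.exp x e' c' y hxe (hmem _ hm) hy2

lemma good_mod {α e x : Ordinal.{0}} (hx : Good α e x) :
    Good α e (x % omega0 ^ log omega0 x) := by
  refine ⟨lt_of_le_of_lt (mod_le _ _) hx.1, ?_⟩
  rcases eq_or_ne x 0 with rfl | hx0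
  · rw [zero_mod]
    rintro y ⟨h1, -⟩
    exact absurd h1 ep_zero_empty
  by_cases hxe : omega0 ^ x = x
  · rw [eps_log hxe, hxe, mod_self]
    rintro y ⟨h1, -⟩
    exact absurd h1 ep_zero_empty
  · rintro y ⟨h1, h2⟩
    exact hx.2 ⟨inEp_mod hx0 hxe h1, h2⟩

lemma inEp_opow {a y : Ordinal.{0}} (h : InEp y (omega0 ^ a)) : InEp y a := by
  rcases inEp_cases h with ⟨hee, rfl⟩ | ⟨-, e', c', hm, hy2⟩
  · have haa : omega0 ^ a = a := by
      have h2 := congrArg (log omega0) hee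
      rwa [log_opow one_lt_omega0, log_opow one_lt_omega0] at h2
    rw [haa]
    exact InEp.self a haa
  · have hCNF : CNF omega0 (omega0 ^ a) = [(a, 1)] := by
      rw [CNF.ne_zero (opow_ne_zero a omega0_ne_zero), log_opow one_lt_omega0,
        div_self (opow_ne_zero a omega0_ne_zero), mod_self, CNF.zero_right]
    rw [hCNF, List.mem_singleton, Prod.mk.injEq] at hm
    exact hm.1 ▸ hy2

lemma good_opow_log {α e x : Ordinal.{0}} (hx : Good α e x) (hx0 : x ≠ 0) :
    Good α e (omega0 ^ log omega0 x) := by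
  refine ⟨lt_of_le_of_lt (opow_log_le_self _ hx0) hx.1, ?_⟩
  rintro y ⟨h1, h2⟩
  exact (good_log hx).2 ⟨inEp_opow h1, h2⟩

lemma log_lt_of_not_eps {x : Ordinal.{0}} (h0 : x ≠ 0) (h : omega0 ^ x ≠ x) :
    log omega0 x < x := by
  have h1 : x < omega0 ^ x :=
    lt_of_le_of_ne (Ordinal.right_le_opow x one_lt_omega0) (Ne.symm h)
  exact (Ordinal.lt_opow_iff_log_lt one_lt_omega0 h0).mp h1

lemma decomp {α e y : Ordinal.{0}} (he : omega0 ^ e = e) (hgy : Good α e y) (hy0 : y ≠ 0) :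
    ∃ a c t : Ordinal.{0}, a = log omega0 y ∧ c = y / omega0 ^ a ∧ t = y % omega0 ^ a ∧
      omega0 ^ a * c + t = y ∧ c ≠ 0 ∧ c < omega0 ∧ t < omega0 ^ a ∧
      Good α e a ∧ Good α e t ∧ Good α e (omega0 ^ a) ∧ omega0 ^ a ≤ y ∧
      y < omega0 ^ (a + 1) ∧
      subst α e y = omega0 ^ subst α e a * c + subst α e t := by
  refine ⟨log omega0 y, y / omega0 ^ log omega0 y, y % omega0 ^ log omega0 y,
    rfl, rfl, rfl, div_add_mod _ _, (div_opow_log_pos omega0 hy0).ne',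
    div_opow_log_lt y one_lt_omega0, mod_lt _ (opow_ne_zero _ omega0_ne_zero),
    good_log hgy, good_mod hgy, good_opow_log hgy hy0, opow_log_le_self _ hy0, ?_, ?_⟩
  · rw [add_one_eq_succ]
    exact lt_opow_succ_log_self one_lt_omega0 y
  · exact subst_eq he hy0

set_option maxHeartbeats 1600000 in
lemma mono {α e : Ordinal.{0}} (hα : IsEps α) (he : omega0 ^ e = e) :
    ∀ x : Ordinal.{0}, Good α e x → ∀ y : Ordinal.{0}, Good α e y → y < x →
      subst α e y < subst α e x := by
  intro x
  induction x using Ordinal.induction with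
  | h x IHx =>
  intro hgx y
  induction y using Ordinal.induction with
  | h y IHy =>
  intro hgy hyx
  by_cases hxe : omega0 ^ x = x
  · -- x is an epsilon number
    have hx0 : x ≠ 0 := eps_ne_zero hxe
    have hxa : x ≤ α := eps_le_of_lt_nextEps hxe hgx.1
    by_cases hye : omega0 ^ y = y
    · -- both epsilon
      have hyα : y < α := lt_of_lt_of_le hyx hxa
      have hyel : y < e := hgy.2 ⟨InEp.self y hye, hyα⟩
      rw [subst_of_eps α e hye, if_neg (ne_of_lt hyα), subst_of_eps α e hxe]
      by_cases hxα : x = α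
      · rw [if_pos hxα]
        exact hyel
      · rw [if_neg hxα]
        exact hyx
    · -- y not epsilon, x epsilon
      rcases eq_or_ne y 0 with rfl | hy0
      · rw [subst_zero]
        exact pos_iff_ne_zero.2 (subst_ne_zero he hx0)
      obtain ⟨a, c, t, ha, hcdiv, htmod, hrep, hc, hcw, ht, hga, hgt, hgwa, hwa_le, hylt, hSy⟩ :=
        decomp he hgy hy0
      have hwax : omega0 ^ a < x := lt_of_le_of_lt hwa_le hyx
      have ht' : subst α e t < omega0 ^ subst α e a := by
        have h2 := IHx (omega0 ^ a) hwax hgwa t hgt ht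
        rwa [subst_opow he] at h2
      have hbound : subst α e y < omega0 ^ (subst α e a + 1) := by
        rw [hSy, opow_add, opow_one]
        calc omega0 ^ subst α e a * c + subst α e t
            < omega0 ^ subst α e a * c + omega0 ^ subst α e a := add_lt_add_right ht' _
          _ = omega0 ^ subst α e a * (c + 1) := by rw [mul_add_one]
          _ ≤ omega0 ^ subst α e a * omega0 := by
              apply mul_le_mul_right
              rwa [add_one_eq_succ, Order.succ_le_iff]
      have hay : a < y := ha ▸ log_lt_of_not_eps hy0 hye
      have hSax : subst α e a < subst α e x := IHy a hay hga (lt_trans hay hyx)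
      refine lt_of_lt_of_le hbound ?_
      have h3 : omega0 ^ (subst α e a + 1) ≤ omega0 ^ subst α e x := by
        apply opow_le_opow_right omega0_pos
        rwa [add_one_eq_succ, Order.succ_le_iff]
      rwa [isEps_subst he hxe] at h3
  · -- x not epsilon
    have hx0 : x ≠ 0 := by
      rintro rfl
      exact absurd hyx (not_lt_of_ge (zero_le : (0 : Ordinal.{0}) ≤ y))
    obtain ⟨b, d, u, hb, hddiv, humod, hrepx, hd, hdw, hu, hgb, hgu, hgwb, hwb_le, hxlt, hSx⟩ :=
      decomp he hgx hx0
    have hbx : b < x := hb ▸ log_lt_of_not_eps hx0 hxe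
    by_cases hye : omega0 ^ y = y
    · -- y epsilon, x not
      have hyb : y ≤ b := by
        have h1 : omega0 ^ y < omega0 ^ (b + 1) := by rw [hye]; exact lt_trans hyx hxlt
        have h2 := (opow_lt_opow_iff_right one_lt_omega0).1 h1
        rwa [add_one_eq_succ, Order.lt_succ_iff] at h2
      rcases lt_or_eq_of_le hyb with hyb' | rfl
      · -- y < b
        calc subst α e y < subst α e b := IHx b hbx hgb y hgy hyb'
          _ ≤ omega0 ^ subst α e b := right_le_opow _ one_lt_omega0
          _ ≤ omega0 ^ subst α e b * d := by
              simpa using mul_le_mul_right (Ordinal.one_le_iff_ne_zero.2 hd) _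
          _ ≤ subst α e x := hSx ▸ le_self_add
      · -- y = b
        have hSyw : subst α e y ≤ omega0 ^ subst α e y := right_le_opow _ one_lt_omega0
        have hkey : omega0 ^ subst α e y < subst α e x := by
          rcases lt_or_ge d 2 with hd2 | hd2
          · have hd1 : d = 1 := by
              have hle1 : d ≤ 1 := by
                rwa [show (2 : Ordinal.{0}) = Order.succ 1 from by rw [← add_one_eq_succ, one_add_one_eq_two], Order.lt_succ_iff] at hd2
              exact le_antisymm hle1 (Ordinal.one_le_iff_ne_zero.2 hd)
            have hu0 : u ≠ 0 := by
              rintro rfl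
              rw [hd1, mul_one, add_zero] at hrepx
              rw [← hrepx, hye] at hyx
              exact lt_irrefl y hyx
            rw [hSx, hd1, mul_one]
            have hSu : subst α e u ≠ 0 := subst_ne_zero he hu0
            exact lt_of_le_of_lt (le_refl _)
              (lt_add_of_pos_right _ (pos_iff_ne_zero.2 hSu))
          · rw [hSx]
            calc omega0 ^ subst α e y = omega0 ^ subst α e y * 1 := (mul_one _).symm
              _ < omega0 ^ subst α e y * 2 := by
                  rw [mul_lt_mul_iff_of_pos_left (opow_pos _ omega0_pos)]
                  exact one_lt_two
              _ ≤ omega0 ^ subst α e y * d := mul_le_mul_right hd2 _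
              _ ≤ omega0 ^ subst α e y * d + subst α e u := le_self_add
        exact lt_of_le_of_lt hSyw hkey
    · -- both not epsilon
      rcases eq_or_ne y 0 with rfl | hy0
      · rw [subst_zero]
        exact pos_iff_ne_zero.2 (subst_ne_zero he hx0)
      obtain ⟨a, c, t, ha, hcdiv, htmod, hrep, hc, hcw, ht, hga, hgt, hgwa, hwa_le, hylt, hSy⟩ :=
        decomp he hgy hy0
      have hwax : omega0 ^ a < x := lt_of_le_of_lt hwa_le hyx
      have ht' : subst α e t < omega0 ^ subst α e a := by
        have h2 := IHx (omega0 ^ a) hwax hgwa t hgt ht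
        rwa [subst_opow he] at h2
      have hab : a ≤ b := by
        rw [ha, hb]
        exact log_mono_right _ hyx.le
      rcases lt_or_eq_of_le hab with hab' | hab'
      · -- a < b
        have hSab : subst α e a < subst α e b := IHx b hbx hgb a hga hab'
        have hbound : subst α e y < omega0 ^ (subst α e a + 1) := by
          rw [hSy, opow_add, opow_one]
          calc omega0 ^ subst α e a * c + subst α e t
              < omega0 ^ subst α e a * c + omega0 ^ subst α e a := add_lt_add_right ht' _
            _ = omega0 ^ subst α e a * (c + 1) := by rw [mul_add_one]
            _ ≤ omega0 ^ subst α e a * omega0 := by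
                apply mul_le_mul_right
                rwa [add_one_eq_succ, Order.succ_le_iff]
        calc subst α e y < omega0 ^ (subst α e a + 1) := hbound
          _ ≤ omega0 ^ subst α e b := by
              apply opow_le_opow_right omega0_pos
              rwa [add_one_eq_succ, Order.succ_le_iff]
          _ ≤ omega0 ^ subst α e b * d := by
              simpa using mul_le_mul_right (Ordinal.one_le_iff_ne_zero.2 hd) _
          _ ≤ subst α e x := hSx ▸ le_self_add
      · -- a = b
        have hcd : c ≤ d := by
          rw [hcdiv, hddiv, ← hab']
          exact div_le_left hyx.le _
        rcases lt_or_eq_of_le hcd with hcd' | hcd'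
        · -- c < d
          rw [hSy, hSx, ← hab']
          calc omega0 ^ subst α e a * c + subst α e t
              < omega0 ^ subst α e a * c + omega0 ^ subst α e a := add_lt_add_right ht' _
            _ = omega0 ^ subst α e a * (c + 1) := by rw [mul_add_one]
            _ ≤ omega0 ^ subst α e a * d := by
                apply mul_le_mul_right
                rwa [add_one_eq_succ, Order.succ_le_iff]
            _ ≤ omega0 ^ subst α e a * d + subst α e u := le_self_add
        · -- c = d
          have htu : t < u := by
            have h1 : omega0 ^ a * c + t < omega0 ^ a * c + u := by
              rw [hrep, hab', hcd', hrepx]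
              exact hyx
            exact lt_of_add_lt_add_left h1
          have hux : u < x := by
            rw [humod, hb]
            exact mod_opow_log_lt_self omega0 hx0
          have hStu : subst α e t < subst α e u := IHx u hux hgu t hgt htu
          rw [hSy, hSx, ← hab', ← hcd']
          exact add_lt_add_right hStu _
lemma le_head {a d u : Ordinal.{0}} (hd : d ≠ 0) : omega0 ^ a ≤ omega0 ^ a * d + u :=
  le_trans (by simpa using mul_le_mul_right (Ordinal.one_le_iff_ne_zero.2 hd) (omega0 ^ a))
    (le_self_add)

lemma head_bound {A C T : Ordinal.{0}} (hT : T < omega0 ^ A) (hC : C < omega0) :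
    omega0 ^ A * C + T < omega0 ^ (A + 1) := by
  rw [opow_add, opow_one]
  calc omega0 ^ A * C + T < omega0 ^ A * C + omega0 ^ A := add_lt_add_right hT _
    _ = omega0 ^ A * (C + 1) := by rw [mul_add_one]
    _ ≤ omega0 ^ A * omega0 := by
        apply mul_le_mul_right
        rwa [add_one_eq_succ, Order.succ_le_iff]

set_option maxHeartbeats 1000000 in
lemma subst_add {α e : Ordinal.{0}} (hα : IsEps α) (he : omega0 ^ e = e) :
    ∀ q : Ordinal.{0}, Good α e q → ∀ s : Ordinal.{0}, Good α e s →
      subst α e (q + s) = subst α e q + subst α e s := by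
  intro q
  induction q using Ordinal.induction with
  | h q IHq =>
  intro hgq s hgs
  rcases eq_or_ne q 0 with rfl | hq0
  · rw [zero_add, subst_zero, zero_add]
  rcases eq_or_ne s 0 with rfl | hs0
  · rw [add_zero, subst_zero, add_zero]
  obtain ⟨a, c, t, ha, hcdiv, htmod, hrep, hc, hcw, ht, hga, hgt, hgwa, hwa_le, hqlt, hSq⟩ :=
    decomp he hgq hq0
  obtain ⟨b, d, u, hb, hddiv, humod, hreps, hd, hdw, hu, hgb, hgu, hgwb, hwb_le, hslt, hSs⟩ :=
    decomp he hgs hs0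
  have hSt : subst α e t < omega0 ^ subst α e a := by
    have h2 := mono hα he (omega0 ^ a) hgwa t hgt ht
    rwa [subst_opow he] at h2
  rcases lt_trichotomy a b with hab | hab | hab
  · -- a < b : absorption on both sides
    have h1 : q < omega0 ^ b :=
      lt_of_lt_of_le hqlt
        (opow_le_opow_right omega0_pos (by rwa [add_one_eq_succ, Order.succ_le_iff]))
    have hqs : q + s = s := add_absorp h1 hwb_le
    have hSab : subst α e a < subst α e b := mono hα he b hgb a hga hab
    have h3 : subst α e q < omega0 ^ subst α e b := by
      rw [hSq]
      exact lt_of_lt_of_le (head_bound hSt hcw)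
        (opow_le_opow_right omega0_pos (by rwa [add_one_eq_succ, Order.succ_le_iff]))
    have h4 : omega0 ^ subst α e b ≤ subst α e s := by
      rw [hSs]
      exact le_head hd
    rw [hqs, add_absorp h3 h4]
  · -- a = b
    subst hab
    have hkey : q + s = omega0 ^ a * (c + d) + u := by
      rw [← hrep]
      conv_lhs => rw [← hreps]
      rw [add_assoc, add_absorp ht (le_head hd), mul_add, add_assoc]
    have hcd0 : c + d ≠ 0 := by
      intro h0
      exact hc (left_eq_zero_of_add_eq_zero h0)
    have hcdw : c + d < omega0 := principal_add_omega0 hcw hdw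
    rw [hkey, substE he hcd0 hcdw hu, hSq, hSs, mul_add, add_assoc, add_assoc,
      add_absorp hSt (le_head hd)]
  · -- b < a
    have hsa : s < omega0 ^ a :=
      lt_of_lt_of_le hslt
        (opow_le_opow_right omega0_pos (by rwa [add_one_eq_succ, Order.succ_le_iff]))
    have hts : t + s < omega0 ^ a := principal_add_omega0_opow a ht hsa
    have hkey : q + s = omega0 ^ a * c + (t + s) := by
      rw [← hrep, add_assoc]
    have htq : t < q := lt_of_lt_of_le ht hwa_le
    rw [hkey, substE he hc hcw hts, IHq t htq hgt s hgs, hSq, add_assoc]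

lemma mul_natlike {a c t : Ordinal.{0}} (ht : t < omega0 ^ a) (hc : c ≠ 0) :
    ∀ n : ℕ, n ≠ 0 → (omega0 ^ a * c + t) * n = omega0 ^ a * (c * n) + t := by
  intro n
  induction n with
  | zero => exact fun h => absurd rfl h
  | succ m IH =>
    intro _
    rcases Nat.eq_zero_or_pos m with rfl | hm
    · simp
    · have hrec := IH hm.ne'
      have hcast : ((m + 1 : ℕ) : Ordinal.{0}) = (m : Ordinal.{0}) + 1 := by exact_mod_cast Nat.cast_succ _
      rw [hcast, mul_add_one, hrec, add_assoc, add_absorp ht (le_head hc), ← add_assoc,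
        ← mul_add, ← mul_add_one]

lemma mul_omega0_opow_eq {q a b : Ordinal.{0}} (h1 : omega0 ^ a ≤ q)
    (h2 : q < omega0 ^ (a + 1)) (hb : b ≠ 0) : q * omega0 ^ b = omega0 ^ (a + b) := by
  have hqn : ∀ m : ℕ, q * m < omega0 ^ (a + 1) := by
    intro m
    induction m with
    | zero =>
      rw [Nat.cast_zero, mul_zero]
      exact opow_pos _ omega0_pos
    | succ k IHk =>
      have hcast : ((k + 1 : ℕ) : Ordinal.{0}) = (k : Ordinal.{0}) + 1 := by exact_mod_cast Nat.cast_succ _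
      rw [hcast, mul_add_one]
      exact principal_add_omega0_opow (a + 1) IHk h2
  have hqw : q * omega0 = omega0 ^ (a + 1) := by
    apply le_antisymm
    · refine (mul_le_iff_of_isSuccLimit isSuccLimit_omega0).2 ?_
      intro n hn
      obtain ⟨m, rfl⟩ := lt_omega0.1 hn
      exact (hqn m).le
    · calc omega0 ^ (a + 1) = omega0 ^ a * omega0 := by rw [opow_add, opow_one]
        _ ≤ q * omega0 := mul_le_mul_left h1 _
  have hb1 : (1 : Ordinal.{0}) ≤ b := Ordinal.one_le_iff_ne_zero.2 hb
  have hbrep : b = 1 + (b - 1) := (Ordinal.add_sub_cancel_of_le hb1).symm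
  calc q * omega0 ^ b = q * omega0 ^ (1 + (b - 1)) := by rw [← hbrep]
    _ = q * (omega0 * omega0 ^ (b - 1)) := by rw [opow_add, opow_one]
    _ = q * omega0 * omega0 ^ (b - 1) := by rw [mul_assoc]
    _ = omega0 ^ (a + 1) * omega0 ^ (b - 1) := by rw [hqw]
    _ = omega0 ^ (a + 1 + (b - 1)) := (opow_add _ _ _).symm
    _ = omega0 ^ (a + b) := by rw [add_assoc, ← hbrep]

set_option maxHeartbeats 1000000 in
lemma subst_mul {α e : Ordinal.{0}} (hα : IsEps α) (he : omega0 ^ e = e) :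
    ∀ s : Ordinal.{0}, Good α e s → ∀ q : Ordinal.{0}, Good α e q →
      subst α e (q * s) = subst α e q * subst α e s := by
  intro s
  induction s using Ordinal.induction with
  | h s IHs =>
  intro hgs q hgq
  rcases eq_or_ne q 0 with rfl | hq0
  · rw [zero_mul, subst_zero, zero_mul]
  rcases eq_or_ne s 0 with rfl | hs0
  · rw [mul_zero, subst_zero, mul_zero]
  obtain ⟨a, c, t, ha, hcdiv, htmod, hrep, hc, hcw, ht, hga, hgt, hgwa, hwa_le, hqlt, hSq⟩ :=
    decomp he hgq hq0
  obtain ⟨b, d, u, hb, hddiv, humod, hreps, hd, hdw, hu, hgb, hgu, hgwb, hwb_le, hslt, hSs⟩ :=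
    decomp he hgs hs0
  have hSt : subst α e t < omega0 ^ subst α e a := by
    have h2 := mono hα he (omega0 ^ a) hgwa t hgt ht
    rwa [subst_opow he] at h2
  have hSq_lb : omega0 ^ subst α e a ≤ subst α e q := by
    rw [hSq]
    exact le_head hc
  have hSq_ub : subst α e q < omega0 ^ (subst α e a + 1) := by
    rw [hSq]
    exact head_bound hSt hcw
  rcases eq_or_ne b 0 with rfl | hb0
  · -- s is finite
    have hu0 : u = 0 := by
      rw [opow_zero] at hu
      exact Ordinal.lt_one_iff_zero.1 hu
    have hsd : s = d := by
      rw [← hreps, hu0, opow_zero, one_mul, add_zero]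
    obtain ⟨n, hdn⟩ := lt_omega0.1 hdw
    have hn0 : n ≠ 0 := by
      rintro rfl
      rw [hdn] at hd
      exact hd (Nat.cast_zero)
    have hqs : q * s = omega0 ^ a * (c * n) + t := by
      rw [hsd, hdn, ← hrep]
      exact mul_natlike ht hc n hn0
    have hcn : c * (n : Ordinal.{0}) < omega0 := principal_mul_omega0 hcw (nat_lt_omega0 n)
    have hcn0 : c * (n : Ordinal.{0}) ≠ 0 := _root_.mul_ne_zero hc (by simpa using hn0)
    have hSsn : subst α e s = (n : Ordinal.{0}) := by
      rw [hsd, hdn]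
      exact subst_nat he (nat_lt_omega0 n)
    rw [hqs, substE he hcn0 hcn ht, hSq, hSsn]
    exact (mul_natlike hSt hc n hn0).symm
  · -- b > 0
    have hqw : q * omega0 ^ b = omega0 ^ (a + b) := mul_omega0_opow_eq hwa_le hqlt hb0
    have hqpos : (0 : Ordinal.{0}) < q := pos_iff_ne_zero.2 hq0
    have hqu : q * u < omega0 ^ (a + b) := by
      rw [← hqw]
      exact (mul_lt_mul_iff_of_pos_left hqpos).2 hu
    have hqs : q * s = omega0 ^ (a + b) * d + q * u := by
      conv_lhs => rw [← hreps]
      rw [mul_add, ← mul_assoc, hqw]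
    have hus : u < s := by
      rw [humod, hb]
      exact mod_opow_log_lt_self omega0 hs0
    have hrec : subst α e (q * u) = subst α e q * subst α e u := IHs u hus hgu q hgq
    have hab' : subst α e (a + b) = subst α e a + subst α e b := subst_add hα he a hga b hgb
    have hSb0 : subst α e b ≠ 0 := subst_ne_zero he hb0
    rw [hqs, substE he hd hdw hqu, hab', hrec, hSs, mul_add, ← mul_assoc,
      mul_omega0_opow_eq hSq_lb hSq_ub hSb0]

end SubstLemmas

/-- The substitution x ↦ x[α := e] commutes with ordinal addition and
multiplication on ordinals below α⁺ whose epsilon numbers below α lie below e. -/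
theorem subst_add_mul (α e q s : Ordinal.{0}) (hα : IsEps α) (he : IsEps e)
    (hq : q < nextEps α) (hs : s < nextEps α)
    (hqe : Ep q ∩ Set.Iio α ⊆ Set.Iio e) (hse : Ep s ∩ Set.Iio α ⊆ Set.Iio e) :
    subst α e (q + s) = subst α e q + subst α e s ∧
      subst α e (q * s) = subst α e q * subst α e s := by
  have hgq : SubstLemmas.Good α e q := ⟨hq, hqe⟩
  have hgs : SubstLemmas.Good α e s := ⟨hs, hse⟩
  exact ⟨SubstLemmas.subst_add hα he q hgq s hgs, SubstLemmas.subst_mul hα he s hgs q hgq⟩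
end

section
/- Let α, e be epsilon numbers and s an ordinal with s < α⁺. If Ep(s) ∩ α ⊆ e, then (ω^s)[α := e] = ω^(s[α := e]). -/
open Ordinal

/-- The substitution x ↦ x[α := e] commutes with base-ω exponentiation. -/
theorem subst_opow (α e s : Ordinal.{0}) (hα : IsEps α) (he : IsEps e)
    (hs : s < nextEps α) (hse : Ep s ∩ Set.Iio α ⊆ Set.Iio e) :
    subst α e (omega0 ^ s) = omega0 ^ (subst α e s) := by
  by_cases h : omega0 ^ s = s
  · rw [h, subst]
    rw [dif_pos h]
    split_ifs with h1
    · subst h1; exact he.symm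
    · exact h.symm
  · have hne : omega0 ^ (omega0 ^ s) ≠ omega0 ^ s := fun hc =>
      h ((Ordinal.opow_right_inj one_lt_omega0).mp hc)
    have hcnf : CNF omega0 (omega0 ^ s) = [(s, 1)] := by
      rw [Ordinal.CNF.ne_zero (Ordinal.opow_ne_zero s omega0_ne_zero),
        Ordinal.log_opow one_lt_omega0,
        Ordinal.div_self (Ordinal.opow_ne_zero s omega0_ne_zero),
        Ordinal.mod_self, Ordinal.CNF.zero_right]
    rw [subst]
    rw [dif_neg hne,
      List.attach_map_val (l := CNF omega0 (omega0 ^ s)) (f := fun p => omega0 ^ subst α e p.1 * p.2),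
      hcnf]
    simp
end

section
/- Let α be an epsilon number and t an ordinal with t ≥ α. Then α·2 ≤ η(t). -/
open Ordinal

/-- `π t` is the leading additively principal term of the Cantor normal form of `t`. -/
noncomputable def piOrd (t : Ordinal.{0}) : Ordinal.{0} :=
  if t = 0 then 0 else omega0 ^ (Ordinal.log omega0 t)

/-- `d q` is the last exponent `Qₘ` of the CNF of `Q` when `q = ω^Q` is additively
principal, and `0` otherwise. -/
noncomputable def dOrd (q : Ordinal.{0}) : Ordinal.{0} :=
  if omega0 ^ (Ordinal.log omega0 q) = q then
    (((CNF omega0 (Ordinal.log omega0 q)).getLast?).map Prod.fst).getD 0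
  else 0

noncomputable def etaOrd (t : Ordinal.{0}) : Ordinal.{0} := max t (piOrd t + dOrd (piOrd t))

/-- If α is an epsilon number and t ≥ α, then α·2 ≤ η(t). -/
theorem eps_two_le_eta (α t : Ordinal.{0}) (hα : IsEps α) (ht : α ≤ t) :
    α * 2 ≤ etaOrd t := by
  have hω : (1 : Ordinal) < omega0 := one_lt_omega0
  have hα0 : α ≠ 0 := by
    intro h
    rw [IsEps, h, opow_zero] at hα
    exact one_ne_zero hα
  have hlogα : Ordinal.log omega0 α = α := by
    conv_lhs => rw [← hα]
    exact log_opow hω α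
  rcases le_or_gt (α * 2) t with h | h
  · exact h.trans (le_max_left _ _)
  · have ht0 : t ≠ 0 := by
      intro h0; rw [h0] at ht; exact hα0 (le_antisymm ht zero_le)
    have hL : Ordinal.log omega0 t = α := by
      apply le_antisymm
      · rw [← Order.lt_succ_iff, ← lt_opow_iff_log_lt hω ht0]
        calc t < α * 2 := h
          _ ≤ α * omega0 := by
            exact mul_le_mul_right (by exact_mod_cast (nat_lt_omega0 2).le) α
          _ = omega0 ^ (Order.succ α) := by
            rw [opow_succ, hα]
      · rw [← opow_le_iff_le_log hω ht0, hα]; exact ht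
    have hπ : piOrd t = α := by
      rw [piOrd, if_neg ht0, hL, hα]
    have hd : dOrd α = α := by
      rw [dOrd, if_pos (by rw [hlogα]; exact hα), hlogα,
        CNF.ne_zero hα0, hlogα]
      rw [hα, Ordinal.div_self hα0, Ordinal.mod_self, CNF.zero_right]
      simp
    have h2 : α * 2 = α + α := by rw [← one_add_one_eq_two, mul_add, mul_one]
    rw [etaOrd, hπ, hd, h2]
    exact le_max_right _ _
end
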